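/- arXiv:1606.04178 — 4 statements merged into one kernel-verified Lean document; each statement's English description precedes it below -/
import Mathlib

section
/- For all real t ≥ 0 and λ ∈ [1,2], |sin(t) - λ⁻¹ sin(λ t)| ≤ 2 min{1, t³}. -/
lemma aux_sin_sub (x : ℝ) (hx : 0 ≤ x) : |Real.sin x - x| ≤ x ^ 3 / 6 := by
  have hmono : MonotoneOn (fun x => Real.sin x - x + x ^ 3 / 6) (Set.Ici 0) := by
    have hd : ∀ y : ℝ, HasDerivAt (fun x => Real.sin x - x + x ^ 3 / 6)
        (Real.cos y - 1 + 3 * y ^ 2 / 6) y := by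
      intro y
      have := ((Real.hasDerivAt_sin y).sub (hasDerivAt_id y)).add
        ((hasDerivAt_pow 3 y).div_const 6)
      exact this.congr_deriv (by norm_num)
    apply monotoneOn_of_deriv_nonneg (convex_Ici 0)
    · exact Continuous.continuousOn (by continuity)
    · intro y _; exact (hd y).differentiableAt.differentiableWithinAt
    · intro y _
      rw [(hd y).deriv]
      nlinarith [Real.one_sub_sq_div_two_le_cos (x := y)]
  have h1 : Real.sin x ≤ x := Real.sin_le hx
  have h2 : (0:ℝ) - 0 + 0 ^ 3 / 6 ≤ Real.sin x - x + x ^ 3 / 6 := by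
    have := hmono (Set.self_mem_Ici) (Set.mem_Ici.2 hx) hx
    simpa using this
  rw [abs_le]; constructor <;> [nlinarith; nlinarith]

theorem stmt_0 :
    ∀ t : ℝ, 0 ≤ t → ∀ l : ℝ, l ∈ Set.Icc (1:ℝ) 2 →
      |Real.sin t - l⁻¹ * Real.sin (l * t)| ≤ 2 * min 1 (t ^ 3) := by
  intro t ht l hl
  obtain ⟨hl1, hl2⟩ := hl
  have hlpos : 0 < l := by linarith
  have hinvpos : 0 < l⁻¹ := inv_pos.mpr hlpos
  have hinv : l⁻¹ ≤ 1 := by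
    rw [inv_le_one_iff₀]; right; exact hl1
  rcases le_or_gt t 1 with h1 | h1
  · have hmin : min 1 (t ^ 3) = t ^ 3 := by
      rw [min_eq_right]
      nlinarith [mul_le_one₀ h1 ht h1, mul_nonneg ht ht]
    rw [hmin]
    have hb1 := aux_sin_sub t ht
    have hb2 := aux_sin_sub (l * t) (by positivity)
    have key : Real.sin t - l⁻¹ * Real.sin (l * t)
        = (Real.sin t - t) - l⁻¹ * (Real.sin (l * t) - l * t) := by
      field_simp
      ring
    rw [key]
    have habs : |(Real.sin t - t) - l⁻¹ * (Real.sin (l * t) - l * t)|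
        ≤ |Real.sin t - t| + l⁻¹ * |Real.sin (l * t) - l * t| := by
      have h := abs_sub (Real.sin t - t) (l⁻¹ * (Real.sin (l * t) - l * t))
      rwa [abs_mul, abs_of_pos hinvpos] at h
    refine habs.trans ?_
    have hmm : l⁻¹ * |Real.sin (l * t) - l * t| ≤ l⁻¹ * ((l * t) ^ 3 / 6) :=
      mul_le_mul_of_nonneg_left hb2 (le_of_lt hinvpos)
    have h3 : l⁻¹ * ((l * t) ^ 3 / 6) = l ^ 2 * t ^ 3 / 6 := by
      field_simp
    have h4 : l ^ 2 * t ^ 3 ≤ 4 * t ^ 3 := by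
      have : l ^ 2 ≤ 4 := by nlinarith
      nlinarith [pow_nonneg ht 3, mul_le_mul_of_nonneg_right this (pow_nonneg ht 3)]
    linarith [pow_nonneg ht 3]
  · have hmin : min 1 (t ^ 3) = 1 := by
      rw [min_eq_left]
      have := pow_le_pow_left₀ zero_le_one h1.le 3
      simpa using this
    rw [hmin]
    have hs1 : |Real.sin t| ≤ 1 := Real.abs_sin_le_one t
    have hs2 : |Real.sin (l * t)| ≤ 1 := Real.abs_sin_le_one _
    have h := abs_sub (Real.sin t) (l⁻¹ * Real.sin (l * t))
    rw [abs_mul, abs_of_pos hinvpos] at h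
    have hmm : l⁻¹ * |Real.sin (l * t)| ≤ 1 * 1 :=
      mul_le_mul hinv hs2 (abs_nonneg _) zero_le_one
    nlinarith
end

section
/- Let f : [x₀, ∞) → ℝ with A := sup { |f(x) − f(y)| : x₀ < x ≤ y ≤ 2x } < ∞ and δ = A/log 2, and let a ≥ 1. Then there is C > 0 such that for all r, t > 0 with x > x₀ and r·x > x₀: e^{t f(x)} · |e^{−t f(r x)} − e^{−t f(r a x)}| ≤ t · C^t · max{r, 1/r}^{δ t} · |f(r x) − f(r a x)|. -/
lemma abs_exp_sub_exp_le (a b : ℝ) :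
    |Real.exp a - Real.exp b| ≤ max (Real.exp a) (Real.exp b) * |a - b| := by
  wlog h : b ≤ a with H
  · push_neg at h
    rw [abs_sub_comm, abs_sub_comm a b, max_comm]
    exact H b a h.le
  rw [abs_of_nonneg (sub_nonneg.2 (Real.exp_le_exp.2 h)),
    abs_of_nonneg (sub_nonneg.2 h), max_eq_left (Real.exp_le_exp.2 h)]
  have h1 := Real.add_one_le_exp (b - a)
  have h2 : Real.exp b = Real.exp a * Real.exp (b - a) := by
    rw [← Real.exp_add]; ring_nf
  nlinarith [Real.exp_pos a, Real.exp_pos b]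

theorem stmt_2 (x₀ : ℝ) (hx₀ : 0 ≤ x₀) (f : ℝ → ℝ) (A : ℝ)
    (hA : ∀ x y : ℝ, x₀ < x → x ≤ y → y ≤ 2 * x → |f x - f y| ≤ A)
    (δ : ℝ) (hδ : δ = A / Real.log 2) (a : ℝ) (ha : 1 ≤ a) :
    ∃ C > (0:ℝ), ∀ r t x : ℝ, 0 < r → 0 < t → x₀ < x → x₀ < r * x →
      Real.exp (t * f x) *
          |Real.exp (-(t * f (r * x))) - Real.exp (-(t * f (r * a * x)))| ≤
        t * C ^ t * (max r r⁻¹) ^ (δ * t) * |f (r * x) - f (r * a * x)| := by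
  have hlog2 : (0:ℝ) < Real.log 2 := Real.log_pos one_lt_two
  have hA0 : 0 ≤ A := by
    have := hA (x₀ + 1) (x₀ + 1) (by linarith) le_rfl (by linarith)
    simpa using this
  have hδ0 : 0 ≤ δ := hδ ▸ div_nonneg hA0 hlog2.le
  have hδ2 : δ * Real.log 2 = A := by
    rw [hδ]; field_simp
  -- dyadic induction
  have ind : ∀ n : ℕ, ∀ x y : ℝ, x₀ < x → x ≤ y → y ≤ 2 ^ n * x →
      |f x - f y| ≤ A + δ * Real.log (y / x) := by
    intro n
    induction n with
    | zero =>
      intro x y hx hxy hy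
      have hx0 : 0 < x := lt_of_le_of_lt hx₀ hx
      have : y = x := le_antisymm (by simpa using hy) hxy
      subst this
      rw [sub_self, abs_zero, div_self hx0.ne', Real.log_one, mul_zero, add_zero]
      exact hA0
    | succ n ih =>
      intro x y hx hxy hy
      have hx0 : 0 < x := lt_of_le_of_lt hx₀ hx
      by_cases h2 : y ≤ 2 * x
      · have h1 := hA x y hx hxy h2
        have hlog : 0 ≤ Real.log (y / x) :=
          Real.log_nonneg ((one_le_div hx0).2 hxy)
        nlinarith
      · push_neg at h2
        have h2x : x₀ < 2 * x := by linarith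
        have hmid := hA x (2 * x) hx (by linarith) le_rfl
        have htail := ih (2 * x) y h2x h2.le (by
          have : (2:ℝ) ^ (n + 1) * x = 2 ^ n * (2 * x) := by ring
          linarith [hy, this ▸ hy])
        have hy0 : 0 < y := by linarith
        have hlogsplit : Real.log (y / (2 * x)) = Real.log (y / x) - Real.log 2 := by
          rw [show y / (2 * x) = (y / x) / 2 by rw [div_div]; ring_nf,
            Real.log_div (by positivity) (by norm_num)]
        have habs : |f x - f y| ≤ |f x - f (2 * x)| + |f (2 * x) - f y| := by
          calc |f x - f y| = |(f x - f (2 * x)) + (f (2 * x) - f y)| := by ring_nf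
            _ ≤ _ := abs_add_le _ _
        rw [hlogsplit] at htail
        nlinarith
  have key : ∀ x y : ℝ, x₀ < x → x ≤ y →
      |f x - f y| ≤ A + δ * Real.log (y / x) := by
    intro x y hx hxy
    have hx0 : 0 < x := lt_of_le_of_lt hx₀ hx
    obtain ⟨n, hn⟩ := pow_unbounded_of_one_lt (y / x) (by norm_num : (1:ℝ) < 2)
    exact ind n x y hx hxy (by rw [div_lt_iff₀ hx0] at hn; linarith)
  -- the constant
  refine ⟨Real.exp (2 * A + δ * Real.log a), Real.exp_pos _, ?_⟩
  intro r t x hr ht hx hrx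
  have hx0 : 0 < x := lt_of_le_of_lt hx₀ hx
  have hloga : 0 ≤ Real.log a := Real.log_nonneg ha
  have hB0 : 0 ≤ 2 * A + δ * Real.log a := by positivity
  set L := |Real.log r| with hL
  have hL0 : 0 ≤ L := abs_nonneg _
  -- bound 1 : f x - f (r*x)
  have h1 : f x - f (r * x) ≤ A + δ * L := by
    rcases le_or_gt 1 r with h | h
    · have := key x (r * x) hx (le_mul_of_one_le_left hx0.le h)
      have hlog : Real.log (r * x / x) = Real.log r := by
        rw [mul_div_assoc, div_self hx0.ne', mul_one]
      rw [hlog] at this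
      have : f x - f (r * x) ≤ A + δ * Real.log r := le_trans (le_abs_self _) this
      have habs : Real.log r ≤ L := le_abs_self _
      nlinarith
    · have := key (r * x) x hrx (by nlinarith)
      have hlog : Real.log (x / (r * x)) = -Real.log r := by
        rw [show x / (r * x) = r⁻¹ by field_simp, Real.log_inv]
      rw [hlog] at this
      have h'' : f x - f (r * x) ≤ |f (r * x) - f x| := by
        rw [abs_sub_comm]; exact le_abs_self _
      have habs : -Real.log r ≤ L := neg_le_abs _
      nlinarith [h''.trans this]
  -- bound 2 : f x - f (r*a*x)
  have h2 : f x - f (r * a * x) ≤ 2 * A + δ * Real.log a + δ * L := by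
    have hra : r * x ≤ r * a * x := by nlinarith
    have := key (r * x) (r * a * x) hrx hra
    have hlog : Real.log (r * a * x / (r * x)) = Real.log a := by
      rw [show r * a * x / (r * x) = a by field_simp]
    rw [hlog] at this
    have h' : f (r * x) - f (r * a * x) ≤ A + δ * Real.log a :=
      le_trans (le_abs_self _) this
    nlinarith
  -- elementary exp bound
  set u := t * f (r * x)
  set v := t * f (r * a * x)
  have hexp : |Real.exp (-u) - Real.exp (-v)| ≤
      max (Real.exp (-u)) (Real.exp (-v)) * |u - v| := by
    have := abs_exp_sub_exp_le (-u) (-v)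
    have h' : |(-u) - (-v)| = |u - v| := by rw [← abs_neg]; ring_nf
    rwa [h'] at this
  have huv : |u - v| = t * |f (r * x) - f (r * a * x)| := by
    rw [show u - v = t * (f (r * x) - f (r * a * x)) by ring, abs_mul,
      abs_of_pos ht]
  have hmaxexp : Real.exp (t * f x) * max (Real.exp (-u)) (Real.exp (-v)) ≤
      Real.exp (t * (2 * A + δ * Real.log a + δ * L)) := by
    rw [mul_max_of_nonneg _ _ (Real.exp_pos _).le, ← Real.exp_add, ← Real.exp_add]
    apply max_le <;> rw [Real.exp_le_exp]
    · have e1 : t * f x + -u = t * (f x - f (r * x)) := by simp [u]; ring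
      rw [e1]
      have := mul_le_mul_of_nonneg_left h1 ht.le
      nlinarith [mul_nonneg ht.le hA0, mul_nonneg ht.le (mul_nonneg hδ0 hloga)]
    · have e2 : t * f x + -v = t * (f x - f (r * a * x)) := by simp [v]; ring
      rw [e2]
      have := mul_le_mul_of_nonneg_left h2 ht.le
      nlinarith
  -- identify RHS factors
  have hmaxr : (0:ℝ) < max r r⁻¹ := lt_max_of_lt_left hr
  have hlogmax : Real.log (max r r⁻¹) = L := by
    rcases le_or_gt 1 r with h | h
    · rw [max_eq_left (by
        calc r⁻¹ ≤ 1 := inv_le_one_of_one_le₀ h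
          _ ≤ r := h), hL, abs_of_nonneg (Real.log_nonneg h)]
    · rw [max_eq_right (by
        calc r ≤ 1 := h.le
          _ ≤ r⁻¹ := (one_le_inv₀ hr).2 h.le), Real.log_inv, hL,
        abs_of_neg (Real.log_neg hr h)]
  have hrhs : Real.exp (2 * A + δ * Real.log a) ^ t * (max r r⁻¹) ^ (δ * t) =
      Real.exp (t * (2 * A + δ * Real.log a + δ * L)) := by
    rw [Real.rpow_def_of_pos (Real.exp_pos _), Real.rpow_def_of_pos hmaxr,
      Real.log_exp, hlogmax, ← Real.exp_add]
    ring_nf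
  calc Real.exp (t * f x) * |Real.exp (-u) - Real.exp (-v)|
      ≤ Real.exp (t * f x) * (max (Real.exp (-u)) (Real.exp (-v)) * |u - v|) := by
        apply mul_le_mul_of_nonneg_left hexp (Real.exp_pos _).le
    _ = (Real.exp (t * f x) * max (Real.exp (-u)) (Real.exp (-v))) * |u - v| := by
        ring
    _ ≤ Real.exp (t * (2 * A + δ * Real.log a + δ * L)) * |u - v| := by
        apply mul_le_mul_of_nonneg_right hmaxexp (abs_nonneg _)
    _ = t * Real.exp (2 * A + δ * Real.log a) ^ t * (max r r⁻¹) ^ (δ * t) *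
        |f (r * x) - f (r * a * x)| := by
        rw [huv, ← hrhs]; ring
end

section
/- Suppose φ : (0,∞) → (0,∞) is non-increasing-derivative (φ' non-increasing, φ increasing) and φ' satisfies the weak lower scaling condition: φ'(λu) ≥ c λ^{−β} φ'(u) for all λ ≥ 1, u > θ, with β ∈ [0, d/2+1) and c ∈ (0,1]. Then there is a constant C > 0 (depending on θ, β, d, c, φ) such that for all r ≤ θ^{−1/2}: ∫₀^{r^{−2}} u^{d/2} φ'(u) du ≤ C r^{−d−2} φ'(r^{−2}). -/
open MeasureTheory Set Real

theorem stmt_12 (d : ℕ) (hd : 1 ≤ d) (φ : ℝ → ℝ) (θ β c : ℝ)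
    (hθ : 0 < θ) (hβ : 0 ≤ β) (hβ' : β < (d : ℝ) / 2 + 1)
    (hc : 0 < c) (hc' : c ≤ 1)
    (hmono : ∀ u v : ℝ, 0 < u → u ≤ v → φ u ≤ φ v)
    (hφ'pos : ∀ u : ℝ, 0 < u → 0 < deriv φ u)
    (hφ'mono : ∀ u v : ℝ, 0 < u → u ≤ v → deriv φ v ≤ deriv φ u)
    (hwlsc : ∀ l u : ℝ, 1 ≤ l → θ < u →
        c * l ^ (-β) * deriv φ u ≤ deriv φ (l * u)) :
    ∃ C > (0:ℝ), ∀ r : ℝ, 0 < r → r ≤ θ ^ (-(1:ℝ)/2) →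
      (∫ u in (0:ℝ)..(r ^ 2)⁻¹, u ^ ((d : ℝ) / 2) * deriv φ u) ≤
        C * r ^ (-(d : ℝ) - 2) * deriv φ ((r ^ 2)⁻¹) := by
  have hD2 : 0 < deriv φ (2*θ) := hφ'pos _ (by linarith)
  have hd1 : (1:ℝ) ≤ (d:ℝ) := by exact_mod_cast hd
  have hdnn : (0:ℝ) ≤ (d:ℝ)/2 := by positivity
  have hp : (-1:ℝ) < (d:ℝ)/2 - β := by linarith
  have hp1 : (0:ℝ) < (d:ℝ)/2 - β + 1 := by linarith
  have hRfact : ∀ r : ℝ, 0 < r → r ≤ θ ^ (-(1:ℝ)/2) → θ ≤ (r^2)⁻¹ := by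
    intro r hr hrθ
    have h2 : (θ ^ (-(1:ℝ)/2))^2 = θ⁻¹ := by
      rw [← Real.rpow_natCast (θ ^ (-(1:ℝ)/2)) 2, ← Real.rpow_mul hθ.le]
      norm_num [Real.rpow_neg_one]
    have h1 : r^2 ≤ θ⁻¹ := h2 ▸ pow_le_pow_left₀ hr.le hrθ 2
    have h3 : (θ⁻¹)⁻¹ ≤ (r^2)⁻¹ := inv_anti₀ (pow_pos hr 2) h1
    rwa [inv_inv] at h3
  have hlow : ∀ R : ℝ, θ ≤ R →
      c * (2:ℝ)^(-β) * (R/θ)^(-β) * deriv φ (2*θ) ≤ deriv φ R := by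
    intro R hRθ
    have hR0 : 0 < R := lt_of_lt_of_le hθ hRθ
    have hdivpos : 0 < R/θ := div_pos hR0 hθ
    by_cases h2R : 2*θ ≤ R
    · have hl : 1 ≤ R/(2*θ) := (one_le_div (by linarith)).mpr h2R
      have h := hwlsc (R/(2*θ)) (2*θ) hl (by linarith)
      rw [div_mul_cancel₀ _ (by positivity : (2*θ) ≠ 0)] at h
      refine le_trans ?_ h
      have hkey : (2:ℝ)^(-β) * (R/θ)^(-β) ≤ (R/(2*θ))^(-β) := by
        have e : R/(2*θ) = (R/θ)/2 := by rw [div_div, mul_comm]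
        rw [e, Real.div_rpow hdivpos.le (by norm_num : (0:ℝ) ≤ 2)]
        have e2 : (R/θ)^(-β) / (2:ℝ)^(-β) = (R/θ)^(-β) * (2:ℝ)^β := by
          rw [Real.rpow_neg (by norm_num : (0:ℝ) ≤ 2) β, div_eq_mul_inv, inv_inv]
        rw [e2]
        have h2b : (2:ℝ)^(-β) ≤ (2:ℝ)^β :=
          Real.rpow_le_rpow_of_exponent_le one_le_two (by linarith)
        have hpos : 0 ≤ (R/θ)^(-β) := Real.rpow_nonneg hdivpos.le _
        rw [mul_comm ((R/θ)^(-β)) ((2:ℝ)^β)]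
        exact mul_le_mul_of_nonneg_right h2b hpos
      calc c * (2:ℝ)^(-β) * (R/θ)^(-β) * deriv φ (2*θ)
          = c * ((2:ℝ)^(-β) * (R/θ)^(-β)) * deriv φ (2*θ) := by ring
        _ ≤ c * (R/(2*θ))^(-β) * deriv φ (2*θ) :=
            mul_le_mul_of_nonneg_right (mul_le_mul_of_nonneg_left hkey hc.le) hD2.le
    · have hmono' : deriv φ (2*θ) ≤ deriv φ R := hφ'mono R (2*θ) hR0 (le_of_not_ge h2R)
      have hco : c * (2:ℝ)^(-β) * (R/θ)^(-β) ≤ 1 := by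
        have a1 : (2:ℝ)^(-β) ≤ 1 :=
          Real.rpow_le_one_of_one_le_of_nonpos one_le_two (by linarith)
        have a2 : (R/θ)^(-β) ≤ 1 :=
          Real.rpow_le_one_of_one_le_of_nonpos ((one_le_div hθ).mpr hRθ) (by linarith)
        have b1 : 0 ≤ (2:ℝ)^(-β) := Real.rpow_nonneg (by norm_num) _
        have b2 : 0 ≤ (R/θ)^(-β) := Real.rpow_nonneg hdivpos.le _
        nlinarith [mul_le_mul a1 a2 b2 zero_le_one, mul_nonneg b1 b2]
      calc c * (2:ℝ)^(-β) * (R/θ)^(-β) * deriv φ (2*θ) ≤ 1 * deriv φ (2*θ) :=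
            mul_le_mul_of_nonneg_right hco hD2.le
        _ = deriv φ (2*θ) := one_mul _
        _ ≤ deriv φ R := hmono'
  by_cases hI : IntervalIntegrable (fun u => u ^ ((d:ℝ)/2) * deriv φ u) volume 0 θ
  · -- integrable case
    set A : ℝ := ∫ u in (0:ℝ)..θ, u ^ ((d:ℝ)/2) * deriv φ u with hAdef
    have hA0 : 0 ≤ A := by
      apply intervalIntegral.integral_nonneg hθ.le
      intro u hu
      rcases eq_or_lt_of_le hu.1 with h | h
      · simp [← h, Real.zero_rpow (by positivity : ((d:ℝ)/2) ≠ 0)]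
      · exact mul_nonneg (Real.rpow_nonneg h.le _) (hφ'pos u h).le
    set K1 : ℝ := A / deriv φ (2*θ) * c⁻¹ * (2:ℝ)^β * θ ^ (-((d:ℝ)/2+1)) with hK1def
    set K2 : ℝ := c⁻¹ * ((d:ℝ)/2 - β + 1)⁻¹ with hK2def
    have hK1nn : 0 ≤ K1 := by
      have := div_nonneg hA0 hD2.le
      have h2 : (0:ℝ) ≤ (2:ℝ)^β := Real.rpow_nonneg (by norm_num) _
      have h3 : (0:ℝ) ≤ θ ^ (-((d:ℝ)/2+1)) := Real.rpow_nonneg hθ.le _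
      positivity
    have hK2nn : 0 ≤ K2 := by positivity
    refine ⟨K1 + K2 + 1, by linarith, fun r hr hrθ => ?_⟩
    have hRθ' : θ ≤ (r^2)⁻¹ := hRfact r hr hrθ
    set R : ℝ := (r^2)⁻¹ with hRdef
    have hR0 : 0 < R := lt_of_lt_of_le hθ hRθ'
    have hDR : 0 < deriv φ R := hφ'pos _ hR0
    have hdiv1 : (1:ℝ) ≤ R/θ := (one_le_div hθ).mpr hRθ'
    have hI2 : IntervalIntegrable (fun u => u ^ ((d:ℝ)/2) * deriv φ u) volume θ R := by
      have hanti : AntitoneOn (deriv φ) (uIcc θ R) := by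
        rw [uIcc_of_le hRθ']
        exact fun a ha b hb hab => hφ'mono a b (lt_of_lt_of_le hθ ha.1) hab
      refine hanti.intervalIntegrable.continuousOn_mul ?_
      apply ContinuousOn.rpow_const continuousOn_id
      intro x hx
      rw [uIcc_of_le hRθ'] at hx
      exact Or.inl (lt_of_lt_of_le hθ hx.1).ne'
    have hsplit := intervalIntegral.integral_add_adjacent_intervals hI hI2
    -- pointwise bound on (θ, R]
    have hptwise : ∀ u : ℝ, θ < u → u ≤ R →
        u ^ ((d:ℝ)/2) * deriv φ u ≤
          (c⁻¹ * R^β * deriv φ R) * u ^ ((d:ℝ)/2 - β) := by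
      intro u hθu huR
      have hu0 : 0 < u := hθ.trans hθu
      have hl : 1 ≤ R/u := (one_le_div hu0).mpr huR
      have h := hwlsc (R/u) u hl hθu
      rw [div_mul_cancel₀ _ hu0.ne'] at h
      have hx : 0 < c * (R/u)^(-β) := by
        have := Real.rpow_pos_of_pos (div_pos hR0 hu0) (-β)
        positivity
      have key : deriv φ u ≤ (c * (R/u)^(-β))⁻¹ * deriv φ R := by
        rw [inv_mul_eq_div, le_div_iff₀ hx, mul_comm]
        linarith [h]
      have key2 : deriv φ u ≤ c⁻¹ * (R/u)^β * deriv φ R := by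
        have e : (c * (R/u)^(-β))⁻¹ = c⁻¹ * (R/u)^β := by
          rw [Real.rpow_neg (div_pos hR0 hu0).le, mul_inv, inv_inv]
        rwa [e] at key
      calc u ^ ((d:ℝ)/2) * deriv φ u
          ≤ u ^ ((d:ℝ)/2) * (c⁻¹ * (R/u)^β * deriv φ R) :=
            mul_le_mul_of_nonneg_left key2 (Real.rpow_nonneg hu0.le _)
        _ = (c⁻¹ * R^β * deriv φ R) * u ^ ((d:ℝ)/2 - β) := by
            rw [Real.div_rpow hR0.le hu0.le, sub_eq_add_neg, Real.rpow_add hu0,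
              Real.rpow_neg hu0.le]
            have hub : (0:ℝ) < u ^ β := Real.rpow_pos_of_pos hu0 β
            field_simp
    have hIg : IntervalIntegrable
        (fun u => (c⁻¹ * R^β * deriv φ R) * u ^ ((d:ℝ)/2 - β)) volume θ R := by
      apply ContinuousOn.intervalIntegrable
      apply ContinuousOn.mul continuousOn_const
      apply ContinuousOn.rpow_const continuousOn_id
      intro x hx
      rw [uIcc_of_le hRθ'] at hx
      exact Or.inl (lt_of_lt_of_le hθ hx.1).ne'
    have hae : (fun u => u ^ ((d:ℝ)/2) * deriv φ u) ≤ᵐ[volume.restrict (Icc θ R)]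
        (fun u => (c⁻¹ * R^β * deriv φ R) * u ^ ((d:ℝ)/2 - β)) := by
      have hne : ∀ᵐ u : ℝ, u ≠ θ := by
        rw [MeasureTheory.ae_iff]
        simpa using (measure_singleton θ : (volume : Measure ℝ) {θ} = 0)
      have hmem : ∀ᵐ u ∂(volume.restrict (Icc θ R)), u ∈ Icc θ R :=
        ae_restrict_mem measurableSet_Icc
      filter_upwards [hmem, ae_restrict_of_ae hne] with u hu hneq
      exact hptwise u (lt_of_le_of_ne hu.1 (Ne.symm hneq)) hu.2
    have hmono2 := intervalIntegral.integral_mono_ae_restrict hRθ' hI2 hIg hae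
    have hgval : (∫ u in θ..R, (c⁻¹ * R^β * deriv φ R) * u ^ ((d:ℝ)/2 - β)) =
        (c⁻¹ * R^β * deriv φ R) *
          ((R ^ ((d:ℝ)/2 - β + 1) - θ ^ ((d:ℝ)/2 - β + 1)) / ((d:ℝ)/2 - β + 1)) := by
      rw [intervalIntegral.integral_const_mul, integral_rpow (Or.inl hp)]
    have hgle : (∫ u in θ..R, (c⁻¹ * R^β * deriv φ R) * u ^ ((d:ℝ)/2 - β)) ≤
        K2 * (R ^ ((d:ℝ)/2 + 1) * deriv φ R) := by
      rw [hgval]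
      have hsub : (R ^ ((d:ℝ)/2 - β + 1) - θ ^ ((d:ℝ)/2 - β + 1)) / ((d:ℝ)/2 - β + 1)
          ≤ R ^ ((d:ℝ)/2 - β + 1) / ((d:ℝ)/2 - β + 1) := by
        refine (div_le_div_iff_of_pos_right hp1).mpr ?_
        nlinarith [Real.rpow_nonneg hθ.le ((d:ℝ)/2 - β + 1)]
      have hconstnn : 0 ≤ c⁻¹ * R^β * deriv φ R := by
        have := Real.rpow_nonneg hR0.le β
        positivity
      calc (c⁻¹ * R^β * deriv φ R) *
            ((R ^ ((d:ℝ)/2 - β + 1) - θ ^ ((d:ℝ)/2 - β + 1)) / ((d:ℝ)/2 - β + 1))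
          ≤ (c⁻¹ * R^β * deriv φ R) * (R ^ ((d:ℝ)/2 - β + 1) / ((d:ℝ)/2 - β + 1)) :=
            mul_le_mul_of_nonneg_left hsub hconstnn
        _ = K2 * (R ^ ((d:ℝ)/2 + 1) * deriv φ R) := by
            have hRR : R ^ ((d:ℝ)/2+1) = R^β * R^((d:ℝ)/2-β+1) := by
              rw [← Real.rpow_add hR0]; ring_nf
            rw [hRR, hK2def, div_eq_mul_inv]; ring
    have hI2le : (∫ u in θ..R, u ^ ((d:ℝ)/2) * deriv φ u) ≤
        K2 * (R ^ ((d:ℝ)/2 + 1) * deriv φ R) := le_trans hmono2 hgle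
    -- bound on A
    have hD2le : deriv φ (2*θ) ≤ c⁻¹ * (2:ℝ)^β * (R/θ)^β * deriv φ R := by
      have h := hlow R hRθ'
      have p2 : (0:ℝ) < (2:ℝ)^β := Real.rpow_pos_of_pos (by norm_num) β
      have p3 : (0:ℝ) < (R/θ)^β := Real.rpow_pos_of_pos (div_pos hR0 hθ) β
      have e1 : (2:ℝ)^(-β) = ((2:ℝ)^β)⁻¹ := Real.rpow_neg (by norm_num) β
      have e2 : (R/θ)^(-β) = ((R/θ)^β)⁻¹ := Real.rpow_neg (div_pos hR0 hθ).le β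
      rw [e1, e2] at h
      calc deriv φ (2*θ)
          = (c⁻¹ * (2:ℝ)^β * (R/θ)^β) *
              (c * ((2:ℝ)^β)⁻¹ * (((R/θ)^β)⁻¹) * deriv φ (2*θ)) := by
            field_simp
        _ ≤ (c⁻¹ * (2:ℝ)^β * (R/θ)^β) * deriv φ R := by
            refine mul_le_mul_of_nonneg_left h ?_
            positivity
        _ = c⁻¹ * (2:ℝ)^β * (R/θ)^β * deriv φ R := by ring
    have hexp : (R/θ)^β ≤ (R/θ)^((d:ℝ)/2+1) :=
      Real.rpow_le_rpow_of_exponent_le hdiv1 hβ'.le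
    have hD2le2 : deriv φ (2*θ) ≤ c⁻¹ * (2:ℝ)^β * (R/θ)^((d:ℝ)/2+1) * deriv φ R := by
      refine le_trans hD2le ?_
      have hcf : (0:ℝ) ≤ c⁻¹ * (2:ℝ)^β := by
        have : (0:ℝ) ≤ (2:ℝ)^β := Real.rpow_nonneg (by norm_num) β
        positivity
      exact mul_le_mul_of_nonneg_right (mul_le_mul_of_nonneg_left hexp hcf) hDR.le
    have hdivq : (R/θ)^((d:ℝ)/2+1) = R^((d:ℝ)/2+1) * θ^(-((d:ℝ)/2+1)) := by
      rw [Real.div_rpow hR0.le hθ.le, Real.rpow_neg hθ.le, div_eq_mul_inv]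
    have hAle : A ≤ K1 * (R ^ ((d:ℝ)/2 + 1) * deriv φ R) := by
      calc A = A / deriv φ (2*θ) * deriv φ (2*θ) := (div_mul_cancel₀ A hD2.ne').symm
        _ ≤ A / deriv φ (2*θ) * (c⁻¹ * (2:ℝ)^β * (R/θ)^((d:ℝ)/2+1) * deriv φ R) :=
            mul_le_mul_of_nonneg_left hD2le2 (div_nonneg hA0 hD2.le)
        _ = K1 * (R ^ ((d:ℝ)/2 + 1) * deriv φ R) := by
            rw [hdivq, hK1def]; ring
    have hRpow : R ^ ((d:ℝ)/2 + 1) = r ^ (-(d:ℝ) - 2) := by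
      have hr2 : R = r ^ (-2:ℝ) := by
        rw [show ((-2:ℝ)) = -((2:ℕ):ℝ) by norm_num, Real.rpow_neg hr.le,
          Real.rpow_natCast]
      rw [hr2, ← Real.rpow_mul hr.le]
      congr 1
      ring
    have hXpos : 0 < R ^ ((d:ℝ)/2 + 1) * deriv φ R :=
      mul_pos (Real.rpow_pos_of_pos hR0 _) hDR
    calc (∫ u in (0:ℝ)..R, u ^ ((d:ℝ)/2) * deriv φ u)
        = A + ∫ u in θ..R, u ^ ((d:ℝ)/2) * deriv φ u := hsplit.symm
      _ ≤ K1 * (R ^ ((d:ℝ)/2 + 1) * deriv φ R) + K2 * (R ^ ((d:ℝ)/2 + 1) * deriv φ R) :=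
          add_le_add hAle hI2le
      _ ≤ (K1 + K2 + 1) * (R ^ ((d:ℝ)/2 + 1) * deriv φ R) := by
          have h := mul_le_mul_of_nonneg_right
            (by linarith : K1 + K2 ≤ K1 + K2 + 1) hXpos.le
          calc K1 * (R ^ ((d:ℝ)/2 + 1) * deriv φ R) + K2 * (R ^ ((d:ℝ)/2 + 1) * deriv φ R)
              = (K1 + K2) * (R ^ ((d:ℝ)/2 + 1) * deriv φ R) := by ring
            _ ≤ (K1 + K2 + 1) * (R ^ ((d:ℝ)/2 + 1) * deriv φ R) := h
      _ = (K1 + K2 + 1) * r ^ (-(d:ℝ) - 2) * deriv φ R := by rw [hRpow]; ring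
  · refine ⟨1, one_pos, fun r hr hrθ => ?_⟩
    have hRθ' : θ ≤ (r^2)⁻¹ := hRfact r hr hrθ
    have hnint : ¬ IntervalIntegrable (fun u => u ^ ((d:ℝ)/2) * deriv φ u)
        volume 0 ((r^2)⁻¹) := by
      intro h
      refine hI (h.mono_set ?_)
      rw [uIcc_of_le hθ.le, uIcc_of_le (by positivity : (0:ℝ) ≤ (r^2)⁻¹)]
      exact Icc_subset_Icc le_rfl hRθ'
    rw [intervalIntegral.integral_undef hnint]
    have h1 : 0 < r ^ (-(d:ℝ)-2) := Real.rpow_pos_of_pos hr _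
    have h2 : 0 < deriv φ ((r^2)⁻¹) := hφ'pos _ (by positivity)
    have : 0 < 1 * r ^ (-(d:ℝ)-2) * deriv φ ((r^2)⁻¹) := by
      rw [one_mul]; exact mul_pos h1 h2
    linarith
end

section
/- Let h : (0,∞) → (0,∞) be non-increasing with r ↦ r² h(r) non-decreasing, and K : (0,∞) → [0,∞) with r ↦ r² K(r) non-decreasing and h'(r) = −2 K(r)/r. Suppose there is λ ∈ (0,1) such that h(λ r) ≥ 2 h(r) for all r in (0, R). Then for all r ∈ (0,R): h(r) ≤ (λ^{−2} − 1) K(r). -/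
open Set MeasureTheory Filter Topology

lemma aux_hcontAt {h : ℝ → ℝ}
    (hpos : ∀ r : ℝ, 0 < r → 0 < h r)
    (hanti : ∀ r s : ℝ, 0 < r → r ≤ s → h s ≤ h r)
    (hr2h : ∀ r s : ℝ, 0 < r → r ≤ s → r ^ 2 * h r ≤ s ^ 2 * h s)
    {x : ℝ} (hx : 0 < x) : ContinuousAt h x := by
  have hb : ∀ y : ℝ, 0 < y →
      min ((x / y) ^ 2) 1 * h x ≤ h y ∧ h y ≤ max ((x / y) ^ 2) 1 * h x := by
    intro y hy
    rcases le_total y x with hyx | hxy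
    · refine ⟨?_, ?_⟩
      · calc min ((x / y) ^ 2) 1 * h x ≤ 1 * h x :=
              mul_le_mul_of_nonneg_right (min_le_right _ _) (hpos x hx).le
          _ = h x := one_mul _
          _ ≤ h y := hanti y x hy hyx
      · have h2 := hr2h y x hy hyx
        have h3 : h y ≤ (x / y) ^ 2 * h x := by
          rw [div_pow, div_mul_eq_mul_div, le_div_iff₀ (by positivity)]
          nlinarith
        exact h3.trans (mul_le_mul_of_nonneg_right (le_max_left _ _) (hpos x hx).le)
    · refine ⟨?_, ?_⟩
      · have h2 := hr2h x y hx hxy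
        have h3 : (x / y) ^ 2 * h x ≤ h y := by
          rw [div_pow, div_mul_eq_mul_div, div_le_iff₀ (by positivity)]
          nlinarith
        exact (mul_le_mul_of_nonneg_right (min_le_left _ _) (hpos x hx).le).trans h3
      · calc h y ≤ h x := hanti x y hx hxy
          _ = 1 * h x := (one_mul _).symm
          _ ≤ max ((x / y) ^ 2) 1 * h x :=
              mul_le_mul_of_nonneg_right (le_max_right _ _) (hpos x hx).le
  have hc : ContinuousAt (fun y : ℝ => (x / y) ^ 2) x :=
    ((continuousAt_const.div continuousAt_id hx.ne').pow 2)
  have t1 : Tendsto (fun y : ℝ => min ((x / y) ^ 2) 1 * h x) (𝓝 x) (𝓝 (h x)) := by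
    have hcm : ContinuousAt (fun y : ℝ => min ((x / y) ^ 2) 1 * h x) x :=
      (hc.min continuousAt_const).mul continuousAt_const
    simpa [ContinuousAt, div_self hx.ne'] using hcm
  have t2 : Tendsto (fun y : ℝ => max ((x / y) ^ 2) 1 * h x) (𝓝 x) (𝓝 (h x)) := by
    have hcm : ContinuousAt (fun y : ℝ => max ((x / y) ^ 2) 1 * h x) x :=
      (hc.max continuousAt_const).mul continuousAt_const
    simpa [ContinuousAt, div_self hx.ne'] using hcm
  have hev : ∀ᶠ y in 𝓝 x, 0 < y := eventually_gt_nhds hx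
  refine tendsto_of_tendsto_of_tendsto_of_le_of_le' t1 t2 ?_ ?_
  · filter_upwards [hev] with y hy using (hb y hy).1
  · filter_upwards [hev] with y hy using (hb y hy).2

lemma aux_hconst {h K : ℝ → ℝ}
    (hpos : ∀ r : ℝ, 0 < r → 0 < h r)
    (hanti : ∀ r s : ℝ, 0 < r → r ≤ s → h s ≤ h r)
    (hr2h : ∀ r s : ℝ, 0 < r → r ≤ s → r ^ 2 * h r ≤ s ^ 2 * h s)
    (hderiv : ∀ r : ℝ, 0 < r → deriv h r = -2 * K r / r)
    {a b : ℝ} (ha : 0 < a) (hab : a < b)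
    (hKz : ∀ s : ℝ, 0 < s → s < b → K s = 0) : h b = h a := by
  classical
  set c : ℝ → ℝ := fun x => max a (min x b) with hc
  have hcmem : ∀ x, c x ∈ Icc a b := fun x =>
    ⟨le_max_left _ _, max_le hab.le (min_le_right _ _)⟩
  have hcpos : ∀ x, 0 < c x := fun x => lt_of_lt_of_le ha (hcmem x).1
  have hcmono : Monotone c := fun x y hxy =>
    max_le_max le_rfl (min_le_min hxy le_rfl)
  have hccont : Continuous c := continuous_const.max (continuous_id.min continuous_const)
  set f : ℝ → ℝ := fun x => - h (c x) with hfdef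
  have hfmono : Monotone f := fun x y hxy =>
    neg_le_neg (hanti _ _ (hcpos x) (hcmono hxy))
  have hfcont : Continuous f := by
    have hhc : ContinuousOn h (Ioi (0:ℝ)) := fun z hz =>
      (aux_hcontAt hpos hanti hr2h hz).continuousWithinAt
    exact (hhc.comp_continuous hccont (fun x => hcpos x)).neg
  set C : ℝ := 2 * b * h a / a ^ 2 with hC
  have hb0 : 0 < b := ha.trans hab
  have hC0 : 0 ≤ C := by
    have := (hpos a ha).le
    positivity
  have hlip : ∀ x y : ℝ, x ≤ y → f y - f x ≤ C * (y - x) := by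
    intro x y hxy
    have h1 : c y - c x ≤ y - x := by
      have e1 : |max (min y b) a - max (min x b) a| ≤ |min y b - min x b| :=
        abs_max_sub_max_le_abs _ _ _
      have e2 : |min y b - min x b| ≤ max |y - x| |b - b| := abs_min_sub_min_le_max _ _ _ _
      have e3 : max a (min y b) = max (min y b) a := max_comm _ _
      have e4 : max a (min x b) = max (min x b) a := max_comm _ _
      have e5 : c y - c x ≤ |max (min y b) a - max (min x b) a| := by
        rw [hc]; simp only []
        rw [e3, e4]; exact le_abs_self _
      have e6 : max |y - x| |b - b| = |y - x| := by simp
      have e7 : |y - x| = y - x := abs_of_nonneg (by linarith)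
      calc c y - c x ≤ |min y b - min x b| := e5.trans e1
        _ ≤ |y - x| := by rw [← e6]; exact e2
        _ = y - x := e7
    have hcc : c x ≤ c y := hcmono hxy
    have hax : a ≤ c x := (hcmem x).1
    have hyb : c y ≤ b := (hcmem y).2
    have h2 := hr2h (c x) (c y) (hcpos x) hcc
    have d1 : 0 ≤ h (c x) - h (c y) := sub_nonneg.2 (hanti _ _ (hcpos x) hcc)
    have d2 : h (c y) ≤ h a := hanti a (c y) ha (hcmem y).1
    have d3 : 0 < h (c y) := hpos _ (hcpos y)
    have hx1 : a ^ 2 ≤ (c x) ^ 2 := by nlinarith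
    have key : (h (c x) - h (c y)) * a ^ 2 ≤ 2 * b * h a * (c y - c x) := by
      nlinarith [mul_nonneg (mul_nonneg (sub_nonneg.2 d2) (sub_nonneg.2 hcc)) hb0.le,
        mul_nonneg (mul_nonneg (sub_nonneg.2 (show c y + c x ≤ 2 * b by nlinarith))
          (sub_nonneg.2 hcc)) d3.le,
        mul_nonneg (sub_nonneg.2 hx1) d1]
    have e1 : h (c x) - h (c y) ≤ C * (c y - c x) := by
      rw [hC, div_mul_eq_mul_div, le_div_iff₀ (by positivity)]
      nlinarith
    have : f y - f x = h (c x) - h (c y) := by simp [hfdef]; ring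
    rw [this]
    calc h (c x) - h (c y) ≤ C * (c y - c x) := e1
      _ ≤ C * (y - x) := mul_le_mul_of_nonneg_left h1 hC0
  set S : StieltjesFunction ℝ :=
    ⟨f, hfmono, fun x => hfcont.continuousAt.continuousWithinAt⟩ with hS
  set g : ℝ → ℝ := fun x => C * x - f x with hg
  have hgmono : Monotone g := by
    intro x y hxy
    have := hlip x y hxy
    simp only [hg]
    nlinarith
  have hgcont : Continuous g := (continuous_const.mul continuous_id).sub hfcont
  set T : StieltjesFunction ℝ :=
    ⟨g, hgmono, fun x => hgcont.continuousAt.continuousWithinAt⟩ with hT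
  haveI : IsLocallyFiniteMeasure (S.measure + T.measure) := by
    constructor
    intro x
    refine ⟨Ioo (x - 1) (x + 1), Ioo_mem_nhds (by linarith) (by linarith), ?_⟩
    rw [Measure.add_apply]
    exact ENNReal.add_lt_top.2
      ⟨lt_of_le_of_lt (measure_mono Ioo_subset_Icc_self) measure_Icc_lt_top,
       lt_of_le_of_lt (measure_mono Ioo_subset_Icc_self) measure_Icc_lt_top⟩
  have hsum : S.measure + T.measure = (ENNReal.ofReal C) • volume := by
    refine Measure.ext_of_Ioc _ _ (fun u v huv => ?_)
    rw [Measure.add_apply, S.measure_Ioc, T.measure_Ioc, Measure.smul_apply,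
      Real.volume_Ioc, smul_eq_mul, ← ENNReal.ofReal_mul hC0]
    rw [← ENNReal.ofReal_add (sub_nonneg.2 (hfmono huv.le))
      (sub_nonneg.2 (hgmono huv.le))]
    congr 1
    simp only [hg]
    ring
  have hle : S.measure ≤ (ENNReal.ofReal C) • volume := by
    rw [← hsum]; exact Measure.le_add_right le_rfl
  have hac : S.measure ≪ volume := Measure.absolutelyContinuous_of_le_smul hle
  have hane : ∀ᵐ x : ℝ, x ≠ a := by
    rw [ae_iff]
    have : {x : ℝ | ¬ x ≠ a} = {a} := by ext y; simp
    rw [this]; exact measure_singleton a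
  have hbne : ∀ᵐ x : ℝ, x ≠ b := by
    rw [ae_iff]
    have : {x : ℝ | ¬ x ≠ b} = {b} := by ext y; simp
    rw [this]; exact measure_singleton b
  have hae : ∀ᵐ x : ℝ, (S.measure.rnDeriv volume x).toReal = 0 := by
    filter_upwards [S.ae_hasDerivAt, hane, hbne] with x hx hxa hxb
    have hx' : HasDerivAt f ((S.measure.rnDeriv volume x).toReal) x := hx
    rcases lt_trichotomy x a with hlt | heq | hgt
    · have hev : f =ᶠ[𝓝 x] fun _ => - h a := by
        filter_upwards [Iio_mem_nhds hlt] with y hy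
        have : c y = a := by
          rw [hc]; simp only []
          rw [min_eq_left (le_of_lt (lt_of_lt_of_le hy hab.le)), max_eq_left hy.le]
        simp [hfdef, this]
      have h0 : HasDerivAt f 0 x :=
        (hasDerivAt_const x (- h a)).congr_of_eventuallyEq hev
      exact hx'.unique h0
    · exact absurd heq hxa
    · rcases lt_trichotomy x b with hltb | heqb | hgtb
      · have hev : f =ᶠ[𝓝 x] fun y => - h y := by
          filter_upwards [Ioo_mem_nhds hgt hltb] with y hy
          have : c y = y := by
            rw [hc]; simp only []
            rw [min_eq_left hy.2.le, max_eq_right hy.1.le]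
          simp [hfdef, this]
      -- transfer derivative to h
        have h1 : HasDerivAt (fun y => - h y) ((S.measure.rnDeriv volume x).toReal) x :=
          hx'.congr_of_eventuallyEq hev.symm
        have h2 : HasDerivAt h (-((S.measure.rnDeriv volume x).toReal)) x := by
          exact h1.neg.congr_of_eventuallyEq (Eventually.of_forall fun y => by simp)
        have hx0 : 0 < x := ha.trans hgt
        have h3 : deriv h x = -((S.measure.rnDeriv volume x).toReal) := h2.deriv
        rw [hderiv x hx0, hKz x hx0 hltb] at h3
        simp at h3
        linarith
      · exact absurd heqb hxb
      · have hev : f =ᶠ[𝓝 x] fun _ => - h b := by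
          filter_upwards [Ioi_mem_nhds hgtb] with y hy
          have : c y = b := by
            rw [hc]; simp only []
            rw [min_eq_right hy.le, max_eq_right hab.le]
          simp [hfdef, this]
        have h0 : HasDerivAt f 0 x :=
          (hasDerivAt_const x (- h b)).congr_of_eventuallyEq hev
        exact hx'.unique h0
  have hrn : S.measure.rnDeriv volume =ᵐ[volume] 0 := by
    filter_upwards [hae, Measure.rnDeriv_lt_top S.measure volume] with x h1 h2
    have := ENNReal.toReal_eq_zero_iff _ |>.1 h1
    rcases this with h3 | h3
    · exact h3
    · exact absurd h3 h2.ne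
  have hzero : S.measure = 0 := by
    rw [← Measure.withDensity_rnDeriv_eq _ _ hac, withDensity_congr_ae hrn, withDensity_zero]
  have hIoc := S.measure_Ioc a b
  rw [hzero] at hIoc
  simp only [Measure.coe_zero, Pi.zero_apply] at hIoc
  have h4 : f b - f a ≤ 0 := by
    by_contra hcon
    push_neg at hcon
    rw [eq_comm, ENNReal.ofReal_eq_zero] at hIoc
    linarith
  have h5 : f a ≤ f b := hfmono hab.le
  have ca : c a = a := by
    rw [hc]; simp only []
    rw [min_eq_left hab.le, max_self]
  have cb : c b = b := by
    rw [hc]; simp only []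
    rw [min_self, max_eq_right hab.le]
  have : f a = - h a := by simp [hfdef, ca]
  have : f b = - h b := by simp [hfdef, cb]
  simp only [hfdef, ca, cb] at h4 h5
  linarith

theorem stmt_18 (h K : ℝ → ℝ) (R l : ℝ) (hR : 0 < R)
    (hl : 0 < l) (hl' : l < 1)
    (hpos : ∀ r : ℝ, 0 < r → 0 < h r)
    (hanti : ∀ r s : ℝ, 0 < r → r ≤ s → h s ≤ h r)
    (hr2h : ∀ r s : ℝ, 0 < r → r ≤ s → r ^ 2 * h r ≤ s ^ 2 * h s)
    (hK0 : ∀ r : ℝ, 0 < r → 0 ≤ K r)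
    (hr2K : ∀ r s : ℝ, 0 < r → r ≤ s → r ^ 2 * K r ≤ s ^ 2 * K s)
    (hderiv : ∀ r : ℝ, 0 < r → deriv h r = -2 * K r / r)
    (hdouble : ∀ r : ℝ, 0 < r → r < R → 2 * h r ≤ h (l * r)) :
    ∀ r : ℝ, 0 < r → r < R → h r ≤ ((l ^ 2)⁻¹ - 1) * K r := by
  intro r hr hrR
  by_cases hcase : ∀ s ∈ Ioo (l * r) r, 0 < K s
  · -- integral estimate
    have hlr : 0 < l * r := mul_pos hl hr
    have hltr : l * r < r := by nlinarith
    have hcont : ContinuousOn (fun x => - h x) (Icc (l * r) r) := fun z hz =>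
      ((aux_hcontAt hpos hanti hr2h (lt_of_lt_of_le hlr hz.1)).neg).continuousWithinAt
    set φ : ℝ → ℝ := fun x => 2 * (r ^ 2 * K r) / x ^ 3 with hφ
    have hφcont : ContinuousOn φ (Icc (l * r) r) := by
      apply ContinuousOn.div continuousOn_const (continuousOn_pow 3)
      intro x hx
      exact pow_ne_zero 3 (lt_of_lt_of_le hlr hx.1).ne'
    have hd : ∀ x ∈ Ioo (l * r) r,
        HasDerivWithinAt (fun x => - h x) (2 * K x / x) (Ioi x) x := by
      intro x hx
      have hx0 : 0 < x := hlr.trans hx.1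
      have hKx := hcase x hx
      have hdiff : DifferentiableAt ℝ h x := by
        by_contra hnd
        have hz : deriv h x = 0 := deriv_zero_of_not_differentiableAt hnd
        rw [hderiv x hx0] at hz
        have : K x = 0 := by
          rcases div_eq_zero_iff.1 hz with h' | h'
          · linarith
          · exact absurd h' hx0.ne'
        linarith
      have h1 : HasDerivAt h (-2 * K x / x) x := by
        rw [← hderiv x hx0]; exact hdiff.hasDerivAt
      have h2 : HasDerivAt (fun y => - h y) (2 * K x / x) x := by
        have := h1.neg
        exact this.congr_deriv (by ring)
      exact h2.hasDerivWithinAt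
    have hφint : IntegrableOn φ (Icc (l * r) r) := hφcont.integrableOn_Icc
    have hφg : ∀ x ∈ Ioo (l * r) r, 2 * K x / x ≤ φ x := by
      intro x hx
      have hx0 : 0 < x := hlr.trans hx.1
      have h2 := hr2K x r hx0 hx.2.le
      rw [hφ]
      rw [div_le_div_iff₀ hx0 (by positivity)]
      nlinarith [hK0 x hx0]
    have key := intervalIntegral.sub_le_integral_of_hasDeriv_right_of_le hltr.le hcont hd hφint hφg
    -- compute the integral
    have hval : ∫ y in (l * r)..r, φ y = ((l ^ 2)⁻¹ - 1) * K r := by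
      have hP : ∀ x ∈ uIcc (l * r) r,
          HasDerivAt (fun y : ℝ => -(r ^ 2 * K r) * (y ^ 2)⁻¹) (φ x) x := by
        intro x hx
        rw [uIcc_of_le hltr.le] at hx
        have hx0 : 0 < x := lt_of_lt_of_le hlr hx.1
        have h0 := (hasDerivAt_pow 2 x).inv (pow_ne_zero 2 hx0.ne')
        have h1 := h0.const_mul (-(r ^ 2 * K r))
        refine h1.congr_deriv ?_
        rw [hφ]
        simp only []
        field_simp
        ring
      have hii : IntervalIntegrable φ volume (l * r) r := by
        apply ContinuousOn.intervalIntegrable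
        rw [uIcc_of_le hltr.le]
        exact hφcont
      rw [intervalIntegral.integral_eq_sub_of_hasDerivAt hP hii]
      have hlne : l ≠ 0 := hl.ne'
      have hrne : r ≠ 0 := hr.ne'
      field_simp
      ring
    rw [hval] at key
    have hd2 := hdouble r hr hrR
    -- key : - h r - - h (l * r) ≤ ((l^2)⁻¹ - 1) * K r
    linarith
  · push_neg at hcase
    obtain ⟨s, hs, hKs⟩ := hcase
    have hs0 : 0 < s := (mul_pos hl hr).trans hs.1
    have hKs0 : K s = 0 := le_antisymm hKs (hK0 s hs0)
    have hKz : ∀ y : ℝ, 0 < y → y < s → K y = 0 := by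
      intro y hy hys
      have h2 := hr2K y s hy hys.le
      rw [hKs0] at h2
      have h3 := hK0 y hy
      have hle : K y ≤ 0 := by
        by_contra h'
        push_neg at h'
        have hp := mul_pos (pow_pos hy 2) h'
        nlinarith
      exact le_antisymm hle h3
    have hls : 0 < l * s := mul_pos hl hs0
    have hlts : l * s < s := by nlinarith
    have hconst := aux_hconst hpos hanti hr2h hderiv hls hlts
      (fun y hy hys => hKz y hy (lt_of_lt_of_le hys (le_refl s)))
    have hd2 := hdouble s hs0 (hs.2.trans hrR)
    rw [hconst] at hd2
    have := hpos s hs0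
    linarith
end
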